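/- Grouping of sizes (Lemma 6.9 of Eskin–Masur–Rafi): Fix μ > 1 and η₀ > 1, and define scales recursively by η_{i+1} = μ·η_i³. Then for any finite set {d₁, …, d_m} of positive real numbers, there exists an index i with 0 ≤ i ≤ m such that η_i is an admissible scale for this set; that is, there is a partition E of {d₁, …, d_m} such that any two elements d, d' in the same block satisfy d/d' ≤ η_i (whenever d ≥ d'), and any two elements d, d' in different blocks with d ≥ d' satisfy d/d' ≥ μ·η_i. -/

import Mathlib

open Finset

noncomputable section EMRAux
open Classical

/-- gaps `ρ j` that are small at scale `i` -/
def emrG (η ρ : ℕ → ℝ) (n i : ℕ) : Finset ℕ :=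
  (Finset.range n).filter fun j => ρ j ≤ η i

/-- product of small gaps -/
def emrS (η ρ : ℕ → ℝ) (n i : ℕ) : ℝ := ∏ j ∈ emrG η ρ n i, ρ j

end EMRAux

section EMRAux2

variable {μ : ℝ} {η : ℕ → ℝ}

lemma emr_one_lt (hμ : 1 < μ) (h1 : 1 < η 0) (hrec : ∀ i, η (i+1) = μ * η i ^ 3) :
    ∀ i, 1 < η i := by
  intro i
  induction i with
  | zero => exact h1
  | succ k ih =>
    rw [hrec]
    have h3 : 1 < η k ^ 3 := one_lt_pow₀ ih (by norm_num)
    nlinarith [h3]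

lemma emr_mono (hμ : 1 < μ) (h1 : 1 < η 0) (hrec : ∀ i, η (i+1) = μ * η i ^ 3) :
    Monotone η := by
  apply monotone_nat_of_le_succ
  intro k
  have hk := emr_one_lt hμ h1 hrec k
  rw [hrec]
  have h3 : η k ≤ η k ^ 3 := le_self_pow₀ hk.le (by norm_num)
  nlinarith [h3]

lemma emr_pow_le (hμ : 1 < μ) (h1 : 1 < η 0) (hrec : ∀ i, η (i+1) = μ * η i ^ 3) :
    ∀ q j, η q ^ (j + 1) ≤ η (q + j) := by
  intro q j
  induction j with
  | zero => simp
  | succ k ih =>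
    have hq : 1 < η q := emr_one_lt hμ h1 hrec q
    have hqk : 1 < η (q + k) := emr_one_lt hμ h1 hrec (q + k)
    have h3 : η q ^ (k + 2) ≤ η q ^ (3 * (k + 1)) :=
      pow_le_pow_right₀ hq.le (by omega)
    have h4 : η q ^ (3 * (k + 1)) = (η q ^ (k + 1)) ^ 3 := by
      rw [← pow_mul, Nat.mul_comm]
    have h5 : (η q ^ (k + 1)) ^ 3 ≤ η (q + k) ^ 3 :=
      pow_le_pow_left₀ (by positivity) ih 3
    have h6 : η (q + k) ^ 3 ≤ μ * η (q + k) ^ 3 :=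
      le_mul_of_one_le_left (by positivity) hμ.le
    calc η q ^ (k + 1 + 1) = η q ^ (k + 2) := by ring_nf
    _ ≤ η q ^ (3 * (k + 1)) := h3
    _ = (η q ^ (k + 1)) ^ 3 := h4
    _ ≤ η (q + k) ^ 3 := h5
    _ ≤ μ * η (q + k) ^ 3 := h6
    _ = η (q + k + 1) := (hrec _).symm

end EMRAux2

section EMRKey

variable {μ : ℝ} {η : ℕ → ℝ}

lemma emr_key (hμ : 1 < μ) (h1 : 1 < η 0) (hrec : ∀ i, η (i+1) = μ * η i ^ 3)
    (n : ℕ) (ρ : ℕ → ℝ) (hρ : ∀ j, j < n → 1 < ρ j) :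
    ∀ K, (∀ i, i < K → (∃ j, j < n ∧ η i < ρ j ∧ ρ j < μ * η i) ∨ η i < emrS η ρ n i) →
      ∃ r, emrS η ρ n K ≤ η (K + r) ∧ K + r ≤ (emrG η ρ n K).card := by
  have hη1 : ∀ i, 1 < η i := emr_one_lt hμ h1 hrec
  have hmono : Monotone η := emr_mono hμ h1 hrec
  have hGmem : ∀ i w, w ∈ emrG η ρ n i → 1 < ρ w ∧ ρ w ≤ η i := by
    intro i w hw
    rw [emrG, Finset.mem_filter, Finset.mem_range] at hw
    exact ⟨hρ w hw.1, hw.2⟩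
  have hSpow : ∀ i, emrS η ρ n i ≤ η i ^ (emrG η ρ n i).card := by
    intro i
    rw [emrS, ← Finset.prod_const]
    exact Finset.prod_le_prod (fun w hw => by linarith [(hGmem i w hw).1])
      (fun w hw => (hGmem i w hw).2)
  have hSnonneg : ∀ i, 0 ≤ emrS η ρ n i := by
    intro i
    exact Finset.prod_nonneg (fun w hw => by linarith [(hGmem i w hw).1])
  intro K
  induction K with
  | zero =>
    intro _
    refine ⟨(emrG η ρ n 0).card, ?_, by omega⟩
    calc emrS η ρ n 0 ≤ η 0 ^ (emrG η ρ n 0).card := hSpow 0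
      _ ≤ η 0 ^ ((emrG η ρ n 0).card + 1) := pow_le_pow_right₀ (hη1 0).le (by omega)
      _ ≤ η (0 + (emrG η ρ n 0).card) := emr_pow_le hμ h1 hrec 0 _
  | succ K ih =>
    intro hbad
    obtain ⟨r, hSr, hNr⟩ := ih (fun i hi => hbad i (by omega))
    have hbadK := hbad K (by omega)
    have hsub : emrG η ρ n K ⊆ emrG η ρ n (K+1) := by
      intro w hw
      rw [emrG, Finset.mem_filter] at hw ⊢
      exact ⟨hw.1, hw.2.trans (hmono (Nat.le_succ K))⟩
    have hcard : (emrG η ρ n (K+1)).card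
        = (emrG η ρ n (K+1) \ emrG η ρ n K).card + (emrG η ρ n K).card :=
      (Finset.card_sdiff_add_card_eq_card hsub).symm
    set nw := emrG η ρ n (K+1) \ emrG η ρ n K with hnw
    have hsplit : emrS η ρ n (K+1) = (∏ w ∈ nw, ρ w) * emrS η ρ n K := by
      rw [emrS, emrS, hnw, Finset.prod_sdiff hsub]
    have hnwmem : ∀ w ∈ nw, 1 < ρ w ∧ ρ w ≤ η (K+1) := by
      intro w hw
      exact hGmem (K+1) w (Finset.mem_sdiff.mp hw).1
    -- A-bad witness lies in nw
    have hwitness : ∀ w, w < n → η K < ρ w → ρ w < μ * η K → w ∈ nw := by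
      intro w hwn hw1 hw2
      have hηK := hη1 K
      have h23 : η K ≤ η K ^ 3 := le_self_pow₀ hηK.le (by norm_num)
      have hmm : μ * η K ≤ μ * η K ^ 3 :=
        mul_le_mul_of_nonneg_left h23 (by linarith)
      rw [hnw, Finset.mem_sdiff]
      constructor
      · rw [emrG, Finset.mem_filter, Finset.mem_range]
        refine ⟨hwn, ?_⟩
        rw [hrec]
        linarith
      · intro hc
        rw [emrG, Finset.mem_filter] at hc
        exact absurd hc.2 (not_le.mpr hw1)
    by_cases hj0 : nw.card = 0
    · -- no new gaps: must be B-bad, so r ≥ 1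
      have hnwempty : nw = ∅ := Finset.card_eq_zero.mp hj0
      have hSeq : emrS η ρ n (K+1) = emrS η ρ n K := by
        rw [hsplit, hnwempty]; simp
      have hBbad : η K < emrS η ρ n K := by
        rcases hbadK with ⟨w, hwn, hw1, hw2⟩ | hB
        · exact absurd (hwitness w hwn hw1 hw2) (by rw [hnwempty]; simp)
        · exact hB
      have hr1 : 1 ≤ r := by
        by_contra hr
        have : r = 0 := by omega
        rw [this] at hSr
        simp at hSr
        linarith
      refine ⟨r - 1, ?_, ?_⟩
      · have : K + 1 + (r - 1) = K + r := by omega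
        rw [this, hSeq]; exact hSr
      · omega
    · -- at least one new gap
      have hj1 : 1 ≤ nw.card := by omega
      have hnwprodle : ∀ (b : ℝ), η (K+1) ≤ b → (∏ w ∈ nw, ρ w) ≤ b ^ nw.card := by
        intro b hb
        rw [← Finset.prod_const]
        exact Finset.prod_le_prod (fun w hw => by linarith [(hnwmem w hw).1])
          (fun w hw => le_trans (hnwmem w hw).2 hb)
      by_cases hr0 : r = 0
      · -- S K ≤ η K, so A-bad with witness w
        rw [hr0, Nat.add_zero] at hSr hNr
        obtain ⟨w, hwn, hw1, hw2⟩ : ∃ j, j < n ∧ η K < ρ j ∧ ρ j < μ * η K := by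
          rcases hbadK with h | hB
          · exact h
          · exact absurd hSr (not_le.mpr hB)
        have hwnw : w ∈ nw := hwitness w hwn hw1 hw2
        have herase : (∏ v ∈ nw, ρ v) = ρ w * ∏ v ∈ nw.erase w, ρ v :=
          (Finset.mul_prod_erase nw ρ hwnw).symm
        have heraseclose : (∏ v ∈ nw.erase w, ρ v) ≤ η (K+1) ^ (nw.card - 1) := by
          rw [← Finset.card_erase_of_mem hwnw, ← Finset.prod_const]
          exact Finset.prod_le_prod
            (fun v hv => by linarith [(hnwmem v (Finset.mem_of_mem_erase hv)).1])
            (fun v hv => (hnwmem v (Finset.mem_of_mem_erase hv)).2)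
        have hηK := hη1 K
        have hηK1 := hη1 (K+1)
        have hkey : μ * η K * η K ≤ η (K+1) := by
          have h2 : η K ^ 2 ≤ η K ^ 3 := pow_le_pow_right₀ (hη1 K).le (by omega)
          calc μ * η K * η K = μ * η K ^ 2 := by ring
            _ ≤ μ * η K ^ 3 := mul_le_mul_of_nonneg_left h2 (by linarith)
            _ = η (K + 1) := (hrec K).symm
        have hprod : emrS η ρ n (K+1) ≤ η (K+1) ^ (1 + (nw.card - 1)) := by
          rw [hsplit, herase, pow_add, pow_one]
          have h0e : (0:ℝ) ≤ ∏ v ∈ nw.erase w, ρ v :=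
            Finset.prod_nonneg (fun v hv => by
              linarith [(hnwmem v (Finset.mem_of_mem_erase hv)).1])
          calc ρ w * (∏ v ∈ nw.erase w, ρ v) * emrS η ρ n K
              ≤ (μ * η K) * (∏ v ∈ nw.erase w, ρ v) * emrS η ρ n K := by
                apply mul_le_mul_of_nonneg_right _ (hSnonneg K)
                exact mul_le_mul_of_nonneg_right hw2.le h0e
            _ ≤ (μ * η K) * (∏ v ∈ nw.erase w, ρ v) * η K := by
                apply mul_le_mul_of_nonneg_left hSr
                positivity
            _ = (μ * η K * η K) * (∏ v ∈ nw.erase w, ρ v) := by ring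
            _ ≤ η (K+1) * (∏ v ∈ nw.erase w, ρ v) := by
                exact mul_le_mul_of_nonneg_right hkey h0e
            _ ≤ η (K+1) * η (K+1) ^ (nw.card - 1) := by
                exact mul_le_mul_of_nonneg_left heraseclose (by positivity)
        refine ⟨nw.card - 1, ?_, ?_⟩
        · have h2 : 1 + (nw.card - 1) = (nw.card - 1) + 1 := by omega
          calc emrS η ρ n (K+1) ≤ η (K+1) ^ (1 + (nw.card - 1)) := hprod
            _ = η (K+1) ^ ((nw.card - 1) + 1) := by rw [h2]
            _ ≤ η ((K+1) + (nw.card - 1)) := emr_pow_le hμ h1 hrec _ _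
        · omega
      · -- r ≥ 1
        have hr1 : 1 ≤ r := by omega
        have hq : K + 1 ≤ K + r := by omega
        have hprodnw : (∏ w ∈ nw, ρ w) ≤ η (K + r) ^ nw.card :=
          hnwprodle (η (K + r)) (hmono hq)
        have hprod : emrS η ρ n (K+1) ≤ η (K + r) ^ (nw.card + 1) := by
          rw [hsplit, pow_succ]
          exact mul_le_mul hprodnw hSr (hSnonneg K)
            (pow_nonneg (by linarith [hη1 (K + r)]) _)
        refine ⟨r + nw.card - 1, ?_, ?_⟩
        · have h2 : K + 1 + (r + nw.card - 1) = (K + r) + nw.card := by omega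
          rw [h2]
          exact le_trans hprod (emr_pow_le hμ h1 hrec (K + r) nw.card)
        · omega

end EMRKey

section EMRGood

variable {μ : ℝ} {η : ℕ → ℝ}

lemma emr_good (hμ : 1 < μ) (h1 : 1 < η 0) (hrec : ∀ i, η (i+1) = μ * η i ^ 3)
    (n : ℕ) (ρ : ℕ → ℝ) (hρ : ∀ j, j < n → 1 < ρ j) :
    ∃ i, i ≤ n ∧ (∀ j, j < n → η i < ρ j → μ * η i ≤ ρ j) ∧ emrS η ρ n i ≤ η i := by
  by_contra hcon
  push_neg at hcon
  have hbad : ∀ i, i < n + 1 →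
      (∃ j, j < n ∧ η i < ρ j ∧ ρ j < μ * η i) ∨ η i < emrS η ρ n i := by
    intro i hi
    by_cases hA : ∃ j, j < n ∧ η i < ρ j ∧ ρ j < μ * η i
    · exact Or.inl hA
    · right
      refine hcon i (by omega) ?_
      intro j hj hlt
      by_contra hle
      exact hA ⟨j, hj, hlt, not_le.mp hle⟩
  obtain ⟨r, hS, hN⟩ := emr_key hμ h1 hrec n ρ hρ n (fun i hi => hbad i (by omega))
  have hGsub : emrG η ρ n n ⊆ Finset.range n := by
    rw [emrG]; exact Finset.filter_subset _ _
  have hcardle : (emrG η ρ n n).card ≤ n := by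
    calc (emrG η ρ n n).card ≤ (Finset.range n).card := Finset.card_le_card hGsub
      _ = n := Finset.card_range n
  have hr0 : r = 0 := by omega
  rw [hr0, Nat.add_zero] at hS hN
  have hGfull : emrG η ρ n n = Finset.range n := by
    apply Finset.eq_of_subset_of_card_le hGsub
    rw [Finset.card_range]
    omega
  rcases hbad n (by omega) with ⟨j, hjn, hj1, _⟩ | hB
  · have : j ∈ emrG η ρ n n := by rw [hGfull]; exact Finset.mem_range.mpr hjn
    rw [emrG, Finset.mem_filter] at this
    exact absurd this.2 (not_le.mpr hj1)
  · exact absurd hS (not_le.mpr hB)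

end EMRGood

/-- Grouping of sizes (Lemma 6.9 of Eskin–Masur–Rafi): with scales defined by
`η₀` given and `η_{i+1} = μ·η_i³`, any finite set of positive reals admits an
admissible scale `η_i` with `i ≤ m`. The partition is encoded by a block
assignment `blk`. -/
theorem grouping_of_sizes (μ η₀ : ℝ) (hμ : 1 < μ) (hη₀ : 1 < η₀)
    (η : ℕ → ℝ) (h0 : η 0 = η₀) (hrec : ∀ i : ℕ, η (i + 1) = μ * (η i) ^ 3)
    (D : Finset ℝ) (hpos : ∀ d ∈ D, 0 < d) :
    ∃ i : ℕ, i ≤ D.card ∧ ∃ blk : ℝ → ℕ,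
      ∀ d ∈ D, ∀ d' ∈ D, d' ≤ d →
        (blk d = blk d' → d ≤ η i * d') ∧
        (blk d ≠ blk d' → μ * η i * d' ≤ d) := by
  classical
  have h1 : 1 < η 0 := h0 ▸ hη₀
  have hη1 : ∀ i, 1 < η i := emr_one_lt hμ h1 hrec
  by_cases hm0 : D.card = 0
  · refine ⟨0, by omega, fun _ => 0, ?_⟩
    intro d hd
    rw [Finset.card_eq_zero.mp hm0] at hd
    exact absurd hd (Finset.notMem_empty d)
  -- sorted enumeration
  set m := D.card with hm
  have hm1 : 1 ≤ m := by omega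
  set l := D.sort (· ≤ ·) with hl
  have hlen : l.length = m := Finset.length_sort _
  set x : ℕ → ℝ := fun j => l.getD j 1 with hx
  have hxmem : ∀ j, j < m → x j ∈ D := by
    intro j hj
    have hj' : j < l.length := by omega
    have h2 : x j = l[j] := List.getD_eq_getElem _ _ hj'
    rw [h2]
    have h3 : ∀ y, y ∈ l → y ∈ D := by
      intro y hy
      rw [hl] at hy
      exact (Finset.mem_sort _).mp hy
    exact h3 _ (List.getElem_mem _)
  have hxpos : ∀ j, j < m → 0 < x j := fun j hj => hpos _ (hxmem j hj)
  have hxlt : ∀ p q, p < q → q < m → x p < x q := by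
    intro p q hpq hq
    have hq' : q < l.length := by omega
    have hp' : p < l.length := by omega
    have hs : List.Pairwise (· < ·) l := (Finset.sortedLT_sort D).pairwise
    have h2 := hs.rel_get_of_lt (a := ⟨p, hp'⟩) (b := ⟨q, hq'⟩) (Fin.mk_lt_mk.mpr hpq)
    have hxp : x p = l[p] := List.getD_eq_getElem _ _ hp'
    have hxq : x q = l[q] := List.getD_eq_getElem _ _ hq'
    rw [hxp, hxq]
    exact h2
  have hxle : ∀ p q, p ≤ q → q < m → x p ≤ x q := by
    intro p q hpq hq
    rcases Nat.lt_or_ge p q with h | h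
    · exact (hxlt p q h hq).le
    · have : p = q := by omega
      rw [this]
  have hsurj : ∀ d ∈ D, ∃ j, j < m ∧ x j = d := by
    intro d hd
    have hdl : d ∈ l := by rw [hl, Finset.mem_sort]; exact hd
    obtain ⟨k, hk, hkd⟩ := List.mem_iff_getElem.mp hdl
    refine ⟨k, by omega, ?_⟩
    show l.getD k 1 = d
    rw [List.getD_eq_getElem _ _ hk]
    exact hkd
  -- ratios
  set n := m - 1 with hn
  set ρ : ℕ → ℝ := fun j => x (j + 1) / x j with hρdef
  have hρ : ∀ j, j < n → 1 < ρ j := by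
    intro j hj
    have hj1 : j + 1 < m := by omega
    exact (one_lt_div (hxpos j (by omega))).mpr (hxlt j (j+1) (by omega) hj1)
  have hmul : ∀ k, k + 1 < m → x (k + 1) = x k * ρ k := by
    intro k hk
    have := (hxpos k (by omega)).ne'
    rw [hρdef]
    field_simp
  have hxprod : ∀ p q, p ≤ q → q < m → x q = x p * ∏ j ∈ Finset.Ico p q, ρ j := by
    intro p q
    induction q with
    | zero =>
      intro hpq _
      have : p = 0 := by omega
      subst this
      simp
    | succ k ihk =>
      intro hpq hq
      rcases Nat.lt_or_ge p (k+1) with h | h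
      · have hpk : p ≤ k := by omega
        rw [Finset.prod_Ico_succ_top hpk, hmul k hq, ihk hpk (by omega)]
        ring
      · have : p = k + 1 := by omega
        subst this
        simp
  -- apply the combinatorial lemma
  obtain ⟨i, hin, hA, hB⟩ := emr_good hμ h1 hrec n ρ hρ
  have him : i ≤ D.card := by omega
  set start : ℕ → Prop := fun p => p = 0 ∨ η i < ρ (p - 1) with hstart
  refine ⟨i, him, fun d => ((Finset.range m).filter (fun p => start p ∧ x p ≤ d)).card, ?_⟩
  have hblk : ∀ q, q < m →
      ((Finset.range m).filter (fun p => start p ∧ x p ≤ x q)).card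
        = ((Finset.range (q+1)).filter start).card := by
    intro q hq
    congr 1
    ext p
    simp only [Finset.mem_filter, Finset.mem_range]
    constructor
    · rintro ⟨hpm, hst, hple⟩
      refine ⟨?_, hst⟩
      by_contra hc
      exact absurd (hxlt q p (by omega) hpm) (not_lt.mpr hple)
    · rintro ⟨hpq, hst⟩
      exact ⟨by omega, hst, hxle p q (by omega) hq⟩
  -- main verification
  intro d hd d' hd' hle
  obtain ⟨q, hq, rfl⟩ := hsurj d hd
  obtain ⟨p, hp, rfl⟩ := hsurj d' hd'
  have hpq : p ≤ q := by
    by_contra hc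
    exact absurd (hxlt q p (by omega) hp) (not_lt.mpr hle)
  constructor
  · -- same block
    intro hbeq
    rcases Nat.eq_or_lt_of_le hpq with rfl | hplt
    · have : (0:ℝ) < x p := hxpos p hp
      nlinarith [hη1 i]
    · simp only [hblk q hq, hblk p hp] at hbeq
      have hTsub : (Finset.range (p+1)).filter start ⊆ (Finset.range (q+1)).filter start :=
        Finset.filter_subset_filter _ (by
          intro z hz
          simp only [Finset.mem_range] at hz ⊢
          omega)
      have hTeq : (Finset.range (p+1)).filter start = (Finset.range (q+1)).filter start :=
        Finset.eq_of_subset_of_card_le hTsub (by omega)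
      have hsmall : ∀ jj, p ≤ jj → jj < q → ρ jj ≤ η i := by
        intro jj h1' h2'
        by_contra hc
        have hsj : start (jj + 1) := Or.inr (by simpa using not_le.mp hc)
        have hmem2 : jj + 1 ∈ (Finset.range (q+1)).filter start :=
          Finset.mem_filter.mpr ⟨Finset.mem_range.mpr (by omega), hsj⟩
        rw [← hTeq] at hmem2
        have := (Finset.mem_filter.mp hmem2).1
        rw [Finset.mem_range] at this
        omega
      have hIcoG : Finset.Ico p q ⊆ emrG η ρ n i := by
        intro jj hjj
        rw [Finset.mem_Ico] at hjj
        rw [emrG, Finset.mem_filter, Finset.mem_range]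
        exact ⟨by omega, hsmall jj hjj.1 hjj.2⟩
      have hprodle : (∏ j ∈ Finset.Ico p q, ρ j) ≤ emrS η ρ n i := by
        rw [emrS, ← Finset.prod_sdiff hIcoG]
        have hone : (1:ℝ) ≤ ∏ w ∈ emrG η ρ n i \ Finset.Ico p q, ρ w := by
          have h2 := Finset.prod_le_prod (s := emrG η ρ n i \ Finset.Ico p q)
            (f := fun _ => (1:ℝ)) (g := ρ) (fun _ _ => zero_le_one)
            (fun w hw => by
              have hw2 := (Finset.mem_sdiff.mp hw).1
              rw [emrG, Finset.mem_filter, Finset.mem_range] at hw2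
              exact (hρ w (by omega)).le)
          simpa using h2
        have hpos2 : (0:ℝ) ≤ ∏ j ∈ Finset.Ico p q, ρ j :=
          Finset.prod_nonneg (fun w hw => by
            have hw2 := Finset.mem_Ico.mp hw
            linarith [hρ w (by omega)])
        exact le_mul_of_one_le_left hpos2 hone
      calc x q = x p * ∏ j ∈ Finset.Ico p q, ρ j := hxprod p q hpq hq
        _ ≤ x p * emrS η ρ n i :=
          mul_le_mul_of_nonneg_left hprodle (hxpos p hp).le
        _ ≤ x p * η i := mul_le_mul_of_nonneg_left hB (hxpos p hp).le
        _ = η i * x p := mul_comm _ _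
  · -- different blocks
    intro hbne
    have hpltq : p < q := by
      rcases Nat.eq_or_lt_of_le hpq with rfl | h
      · exact absurd rfl hbne
      · exact h
    simp only [hblk q hq, hblk p hp] at hbne
    have hTsub : (Finset.range (p+1)).filter start ⊆ (Finset.range (q+1)).filter start :=
      Finset.filter_subset_filter _ (by
        intro z hz
        simp only [Finset.mem_range] at hz ⊢
        omega)
    have hnsub : ¬ ((Finset.range (q+1)).filter start ⊆ (Finset.range (p+1)).filter start) := by
      intro hc
      exact hbne (congrArg Finset.card (Finset.Subset.antisymm (fun a ha => hc ha) hTsub))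
    obtain ⟨s, hsq, hsp⟩ := Finset.not_subset.mp hnsub
    have hsq2 := Finset.mem_filter.mp hsq
    have hslt : s < q + 1 := Finset.mem_range.mp hsq2.1
    have hsgt : p < s := by
      by_contra hc
      exact hsp (Finset.mem_filter.mpr ⟨Finset.mem_range.mpr (by omega), hsq2.2⟩)
    have hs0 : s ≠ 0 := by omega
    have hsρ : η i < ρ (s - 1) := by
      rcases hsq2.2 with h | h
      · exact absurd h hs0
      · exact h
    have hsA : μ * η i ≤ ρ (s - 1) := hA (s - 1) (by omega) hsρ
    have hs1 : s - 1 + 1 = s := by omega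
    have hxs : x s = x (s - 1) * ρ (s - 1) := by
      have := hmul (s - 1) (by omega)
      rwa [hs1] at this
    have hxps : x p ≤ x (s - 1) := hxle p (s - 1) (by omega) (by omega)
    have hxsq : x s ≤ x q := hxle s q (by omega) hq
    have hηipos : (0:ℝ) < η i := lt_trans one_pos (hη1 i)
    calc μ * η i * x p ≤ ρ (s - 1) * x p := by
          exact mul_le_mul_of_nonneg_right hsA (hxpos p hp).le
      _ ≤ ρ (s - 1) * x (s - 1) := by
          apply mul_le_mul_of_nonneg_left hxps
          nlinarith [hρ (s - 1) (by omega : s - 1 < n)]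
      _ = x s := by rw [hxs]; ring
      _ ≤ x q := hxsq
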